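/- Let G = K_n be the complete graph on n ≥ 2 vertices, with edge weights θ_{ij} = θ_{ji} ∈ (0, π) on adjacent pairs, and set θ_max = max over edges of θ_{ij}. Suppose α > 0 is such that sin(αθ_{ij}) ≠ 0 for all edges and there exists a nonzero vector ρ : V(G) → ℝ satisfying, for every vertex i, Σ_{j ≠ i} (ρ_j − cos(αθ_{ij})·ρ_i)/sin(αθ_{ij}) = 0. Then α ≥ (2/θ_max)·arctan(n/(n−1)). -/

import Mathlib

open Finset

/-- For the complete graph `K_n` (every pair of distinct vertices adjacent)
with edge weights `θᵢⱼ ∈ (0,π)`: if some nonzero `ρ` satisfies the balancing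
conditions for a nonsingular degree `α > 0`, then
`α ≥ (2/θ_max)·arctan(n/(n-1))`. -/
theorem stmt_8 (n : ℕ) (hn : 2 ≤ n) (θ : Fin n → Fin n → ℝ)
    (hsym : ∀ i j, θ i j = θ j i)
    (hrange : ∀ i j, i ≠ j → θ i j ∈ Set.Ioo (0 : ℝ) Real.pi)
    (θmax : ℝ) (hmax : IsGreatest {t : ℝ | ∃ i j, i ≠ j ∧ θ i j = t} θmax)
    (α : ℝ) (hα : 0 < α)
    (hns : ∀ i j, i ≠ j → Real.sin (α * θ i j) ≠ 0)
    (ρ : Fin n → ℝ) (hρ : ρ ≠ 0)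
    (hbal : ∀ i, ∑ j ∈ Finset.univ.erase i,
        (ρ j - Real.cos (α * θ i j) * ρ i) / Real.sin (α * θ i j) = 0) :
    (2 / θmax) * Real.arctan ((n : ℝ) / ((n : ℝ) - 1)) ≤ α := by
  by_contra hcon
  push_neg at hcon
  set K : ℝ := (n : ℝ) / ((n : ℝ) - 1) with hKdef
  have hN2 : (2:ℝ) ≤ (n:ℝ) := by exact_mod_cast hn
  have hN1 : (0:ℝ) < (n:ℝ) - 1 := by linarith
  have hKpos : 0 < K := div_pos (by linarith) hN1
  obtain ⟨i0, j0, hij0, hθ0⟩ := hmax.1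
  have hθmax_pos : 0 < θmax := hθ0 ▸ (hrange i0 j0 hij0).1
  have hatan_half : Real.arctan K < Real.pi / 2 := Real.arctan_lt_pi_div_two K
  have hT : α * θmax < 2 * Real.arctan K := by
    rw [div_mul_eq_mul_div] at hcon
    exact (lt_div_iff₀ hθmax_pos).mp hcon
  have hTpi : α * θmax < Real.pi := by linarith
  have hθle : ∀ i j, i ≠ j → θ i j ≤ θmax := fun i j h => hmax.2 ⟨i, j, h, rfl⟩
  have htpos : ∀ i j, i ≠ j → 0 < α * θ i j := fun i j h => mul_pos hα (hrange i j h).1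
  have htle : ∀ i j, i ≠ j → α * θ i j ≤ α * θmax := fun i j h =>
    mul_le_mul_of_nonneg_left (hθle i j h) (le_of_lt hα)
  have htpi : ∀ i j, i ≠ j → α * θ i j < Real.pi := fun i j h =>
    lt_of_le_of_lt (htle i j h) hTpi
  have hsin : ∀ i j, i ≠ j → 0 < Real.sin (α * θ i j) := fun i j h =>
    Real.sin_pos_of_pos_of_lt_pi (htpos i j h) (htpi i j h)
  set s : Fin n → Fin n → ℝ := fun i j => Real.tan (α * θ i j / 2) with hsdef
  have hhalf : ∀ i j, i ≠ j → 0 < α * θ i j / 2 ∧ α * θ i j / 2 < Real.arctan K := by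
    intro i j h
    exact ⟨by linarith [htpos i j h], by linarith [htle i j h]⟩
  have hspos : ∀ i j, i ≠ j → 0 < s i j := by
    intro i j h
    exact Real.tan_pos_of_pos_of_lt_pi_div_two (hhalf i j h).1
      (lt_trans (hhalf i j h).2 hatan_half)
  have hsK : ∀ i j, i ≠ j → s i j < K := by
    intro i j h
    have := Real.tan_lt_tan_of_nonneg_of_lt_pi_div_two (le_of_lt (hhalf i j h).1)
      hatan_half (hhalf i j h).2
    rwa [Real.tan_arctan] at this
  have hcosid : ∀ i j, i ≠ j →
      Real.cos (α * θ i j) = 1 - s i j * Real.sin (α * θ i j) := by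
    intro i j h
    have hc : 0 < Real.cos (α * θ i j / 2) := by
      apply Real.cos_pos_of_mem_Ioo
      constructor
      · linarith [(hhalf i j h).1, Real.pi_pos]
      · exact lt_trans (hhalf i j h).2 hatan_half
    have h2 : α * θ i j = 2 * (α * θ i j / 2) := by ring
    have hpy := Real.sin_sq_add_cos_sq (α * θ i j / 2)
    simp only [hsdef]
    rw [h2, Real.sin_two_mul, Real.cos_two_mul, Real.tan_eq_sin_div_cos]
    field_simp
    nlinarith [hpy]
  have hssym : ∀ i j, s i j = s j i := by
    intro i j; simp only [hsdef]; rw [hsym]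
  set p : Fin n → ℝ := fun i => ∑ j ∈ univ.erase i, s i j with hpdef
  have hcard : ∀ i : Fin n, ((univ : Finset (Fin n)).erase i).card = n - 1 := by
    intro i; rw [card_erase_of_mem (mem_univ i), card_univ, Fintype.card_fin]
  have hne : ∀ i : Fin n, ((univ : Finset (Fin n)).erase i).Nonempty := by
    intro i; rw [← Finset.card_pos, hcard]; omega
  have hppos : ∀ i, 0 < p i := by
    intro i
    exact Finset.sum_pos (fun j hj => hspos i j (Finset.mem_erase.mp hj).1.symm) (hne i)
  have hpltN : ∀ i, p i < (n:ℝ) := by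
    intro i
    have h1 : p i < ∑ j ∈ univ.erase i, K :=
      Finset.sum_lt_sum_of_nonempty (hne i)
        (fun j hj => hsK i j (Finset.mem_erase.mp hj).1.symm)
    rw [Finset.sum_const, hcard, nsmul_eq_mul, Nat.cast_sub (by omega : 1 ≤ n),
      Nat.cast_one] at h1
    have h2 : ((n:ℝ) - 1) * K = (n:ℝ) := by
      rw [hKdef]; field_simp
    linarith
  have hswap : ∀ F : Fin n → Fin n → ℝ,
      (∑ i, ∑ j ∈ univ.erase i, F i j) = ∑ i, ∑ j ∈ univ.erase i, F j i := by
    intro F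
    refine Finset.sum_comm' ?_
    intro i j
    simp [Finset.mem_erase, ne_comm, and_comm, eq_comm]
  have hD1 : ∀ f : Fin n → ℝ,
      (∑ i, ∑ j ∈ univ.erase i, s i j * f i) = ∑ i, p i * f i := by
    intro f
    refine Finset.sum_congr rfl fun i _ => ?_
    rw [hpdef, ← Finset.sum_mul]
  have hD2 : ∀ f : Fin n → ℝ,
      (∑ i, ∑ j ∈ univ.erase i, s i j * f j) = ∑ i, p i * f i := by
    intro f
    rw [hswap (fun i j => s i j * f j)]
    rw [show (∑ i, ∑ j ∈ univ.erase i, s j i * f i)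
        = ∑ i, ∑ j ∈ univ.erase i, s i j * f i from
      Finset.sum_congr rfl fun i _ => Finset.sum_congr rfl fun j _ => by rw [hssym]]
    exact hD1 f
  have hdouble : ∀ F G : Fin n → Fin n → ℝ,
      (∀ i j, i ≠ j → F i j + F j i = G i j) →
      2 * (∑ i, ∑ j ∈ univ.erase i, F i j) = ∑ i, ∑ j ∈ univ.erase i, G i j := by
    intro F G hFG
    have h1 := hswap F
    have h2 : (∑ i, ∑ j ∈ univ.erase i, F i j) + (∑ i, ∑ j ∈ univ.erase i, F j i)
        = ∑ i, ∑ j ∈ univ.erase i, G i j := by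
      rw [← Finset.sum_add_distrib]
      refine Finset.sum_congr rfl fun i _ => ?_
      rw [← Finset.sum_add_distrib]
      exact Finset.sum_congr rfl fun j hj => hFG i j (Finset.mem_erase.mp hj).1.symm
    linarith
  -- Step A : ∑ p i * ρ i = 0
  have hA : (∑ i, p i * ρ i) = 0 := by
    have hz0 : (∑ i, ∑ j ∈ univ.erase i,
        (ρ j - Real.cos (α * θ i j) * ρ i) / Real.sin (α * θ i j)) = 0 := by
      simp [hbal]
    have hid : ∀ i j, i ≠ j →
        (ρ j - Real.cos (α * θ i j) * ρ i) / Real.sin (α * θ i j)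
        + (ρ i - Real.cos (α * θ j i) * ρ j) / Real.sin (α * θ j i)
        = s i j * ρ i + s i j * ρ j := by
      intro i j h
      rw [hsym j i, hcosid i j h]
      have hσ := (hsin i j h).ne'
      field_simp
      ring
    have h2 := hdouble _ _ hid
    rw [hz0, mul_zero] at h2
    have h3 : (∑ i, ∑ j ∈ univ.erase i, (s i j * ρ i + s i j * ρ j))
        = (∑ i, p i * ρ i) + (∑ i, p i * ρ i) := by
      simp only [Finset.sum_add_distrib]
      rw [hD1 ρ, hD2 ρ]
    rw [h3] at h2
    linarith
  -- Step B : ∑∑ (ρ i - ρ j)^2 / sin = 2 ∑ p i ρ i ^2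
  have hE : (∑ i, ∑ j ∈ univ.erase i, (ρ i - ρ j)^2 / Real.sin (α * θ i j))
      = 2 * ∑ i, p i * ρ i ^ 2 := by
    have hB0 : (∑ i, ∑ j ∈ univ.erase i,
        ρ i * ((ρ j - Real.cos (α * θ i j) * ρ i) / Real.sin (α * θ i j))) = 0 := by
      refine Finset.sum_eq_zero fun i _ => ?_
      rw [← Finset.mul_sum, hbal i, mul_zero]
    have hid : ∀ i j, i ≠ j →
        ρ i * ((ρ j - Real.cos (α * θ i j) * ρ i) / Real.sin (α * θ i j))
        + ρ j * ((ρ i - Real.cos (α * θ j i) * ρ j) / Real.sin (α * θ j i))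
        = (s i j * ρ i ^ 2 + s i j * ρ j ^ 2) - (ρ i - ρ j)^2 / Real.sin (α * θ i j) := by
      intro i j h
      rw [hsym j i, hcosid i j h]
      have hσ := (hsin i j h).ne'
      field_simp
      ring
    have h2 := hdouble _ _ hid
    rw [hB0, mul_zero] at h2
    have h3 : (∑ i, ∑ j ∈ univ.erase i,
        ((s i j * ρ i ^ 2 + s i j * ρ j ^ 2) - (ρ i - ρ j)^2 / Real.sin (α * θ i j)))
        = (∑ i, p i * ρ i ^ 2) + (∑ i, p i * ρ i ^ 2)
          - ∑ i, ∑ j ∈ univ.erase i, (ρ i - ρ j)^2 / Real.sin (α * θ i j) := by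
      simp only [Finset.sum_sub_distrib, Finset.sum_add_distrib]
      rw [hD1 (fun i => ρ i ^ 2), hD2 (fun i => ρ i ^ 2)]
    rw [h3] at h2
    linarith
  -- lower bound on the sum of squares term
  have hlow : (∑ i, ∑ j ∈ univ.erase i, (ρ i - ρ j)^2)
      ≤ ∑ i, ∑ j ∈ univ.erase i, (ρ i - ρ j)^2 / Real.sin (α * θ i j) := by
    refine Finset.sum_le_sum fun i _ => Finset.sum_le_sum fun j hj => ?_
    have h := (Finset.mem_erase.mp hj).1.symm
    have hσ := hsin i j h
    rw [le_div_iff₀ hσ]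
    nlinarith [Real.sin_le_one (α * θ i j), sq_nonneg (ρ i - ρ j)]
  -- mean and fluctuation
  have hn0 : ((n:ℝ)) ≠ 0 := by linarith
  set m : ℝ := (∑ i, ρ i) / n with hmdef
  set z : Fin n → ℝ := fun i => ρ i - m with hzdef
  have hzsum : (∑ i, z i) = 0 := by
    simp only [hzdef]
    rw [Finset.sum_sub_distrib, Finset.sum_const, card_univ, Fintype.card_fin,
      nsmul_eq_mul, hmdef]
    field_simp
    ring
  have hsq : (∑ i, ∑ j ∈ univ.erase i, (ρ i - ρ j)^2) = 2 * (n:ℝ) * ∑ i, z i ^ 2 := by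
    have h1 : ∀ i : Fin n, (∑ j ∈ univ.erase i, (ρ i - ρ j)^2) = ∑ j, (z i - z j)^2 := by
      intro i
      have hzz : ∀ j, (ρ i - ρ j)^2 = (z i - z j)^2 := by
        intro j; simp only [hzdef]; ring_nf
      rw [Finset.sum_congr rfl fun j _ => hzz j, Finset.sum_erase_eq_sub (mem_univ i)]
      simp
    rw [Finset.sum_congr rfl fun i _ => h1 i]
    have h2 : ∀ i : Fin n, (∑ j, (z i - z j)^2)
        = (n:ℝ) * z i ^ 2 - 2 * z i * (∑ j, z j) + ∑ j, z j ^ 2 := by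
      intro i
      have : ∀ j : Fin n, (z i - z j)^2 = z i ^2 - 2 * z i * z j + z j ^ 2 := by
        intro j; ring
      rw [Finset.sum_congr rfl fun j _ => this j]
      rw [Finset.sum_add_distrib, Finset.sum_sub_distrib, Finset.sum_const, card_univ,
        Fintype.card_fin, nsmul_eq_mul, ← Finset.mul_sum]
    rw [Finset.sum_congr rfl fun i _ => h2 i, hzsum]
    rw [Finset.sum_add_distrib, Finset.sum_sub_distrib, Finset.sum_const, card_univ,
      Fintype.card_fin, nsmul_eq_mul]
    simp only [mul_zero, Finset.sum_const_zero]  -- handle -2*z i*0 terms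
    rw [← Finset.mul_sum]
    ring
  -- expansions of ∑ p ρ and ∑ p ρ²
  have hexp1 : (∑ i, p i * ρ i) = (∑ i, p i * z i) + m * (∑ i, p i) := by
    rw [Finset.mul_sum, ← Finset.sum_add_distrib]
    refine Finset.sum_congr rfl fun i _ => ?_
    have hzi : z i = ρ i - m := by simp only [hzdef]
    rw [hzi]; ring
  have hpz : (∑ i, p i * z i) = -(m * ∑ i, p i) := by linarith [hexp1, hA]
  have hexp2 : (∑ i, p i * ρ i ^ 2)
      = (∑ i, p i * z i ^ 2) + (2 * m) * (∑ i, p i * z i) + m ^ 2 * (∑ i, p i) := by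
    rw [Finset.mul_sum, Finset.mul_sum, ← Finset.sum_add_distrib, ← Finset.sum_add_distrib]
    refine Finset.sum_congr rfl fun i _ => ?_
    have hzi : z i = ρ i - m := by simp only [hzdef]
    rw [hzi]; ring
  have hpsum_pos : 0 < ∑ i, p i := by
    have : Nonempty (Fin n) := ⟨⟨0, by omega⟩⟩
    exact Finset.sum_pos (fun i _ => hppos i) Finset.univ_nonempty
  have hc1 : (∑ i, p i * ρ i ^ 2) = (∑ i, p i * z i ^ 2) - m ^ 2 * (∑ i, p i) := by
    rw [hexp2, hpz]; ring
  -- case split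
  by_cases hz0 : ∀ i, z i = 0
  · have hρm : ∀ i, ρ i = m := by
      intro i
      have := hz0 i
      simp only [hzdef] at this
      linarith
    have hm0 : m ≠ 0 := by
      intro h0
      apply hρ
      funext i
      rw [hρm i, h0]; rfl
    have hAm : (∑ i, p i * ρ i) = m * ∑ i, p i := by
      rw [Finset.mul_sum]
      exact Finset.sum_congr rfl fun i _ => by rw [hρm i]; ring
    rw [hA] at hAm
    rcases mul_eq_zero.mp hAm.symm with h | h
    · exact hm0 h
    · linarith
  · push_neg at hz0
    obtain ⟨k, hk⟩ := hz0
    have hQpos : 0 < ∑ i, z i ^ 2 :=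
      Finset.sum_pos' (fun i _ => sq_nonneg _) ⟨k, mem_univ k, by positivity⟩
    have hd : (∑ i, p i * z i ^ 2) < (n:ℝ) * ∑ i, z i ^ 2 := by
      rw [Finset.mul_sum]
      refine Finset.sum_lt_sum (fun i _ => ?_) ⟨k, mem_univ k, ?_⟩
      · exact mul_le_mul_of_nonneg_right (le_of_lt (hpltN i)) (sq_nonneg _)
      · have h1 := hpltN k
        have h2 : 0 < z k ^ 2 := by positivity
        nlinarith
    have hmP : 0 ≤ m ^ 2 * (∑ i, p i) := mul_nonneg (sq_nonneg m) (le_of_lt hpsum_pos)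
    linarith [hlow, hsq, hE, hc1, hd, hQpos]
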